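/- Let G be a finitely generated group and H a subgroup of infinite index in G. Then there exists a weakly maximal subgroup W of G with H ≤ W. -/

import Mathlib

/-- A subgroup `H` of a group `G` is weakly maximal if it has infinite index and every
subgroup strictly containing it has finite index. -/
def IsWeaklyMaximal {G : Type*} [Group G] (H : Subgroup G) : Prop :=
  H.index = 0 ∧ ∀ M : Subgroup G, H < M → M.index ≠ 0

theorem exists_weaklyMaximal_of_infinite_index {G : Type*} [Group G]
    (hfg : Group.FG G) (H : Subgroup G) (hH : H.index = 0) :
    ∃ W : Subgroup G, IsWeaklyMaximal W ∧ H ≤ W := by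
  haveI := hfg
  obtain ⟨W, hHW, hWs, hWmax⟩ := zorn_le_nonempty₀ {K : Subgroup G | K.index = 0}
    (fun c hcs hc y hy => by
      refine ⟨sSup c, ?_, fun z hz => le_sSup hz⟩
      by_contra hind
      haveI : (sSup c).FiniteIndex := ⟨hind⟩
      have hfgK : (sSup c).FG :=
        (Group.fg_iff_subgroup_fg _).1 (Subgroup.fg_of_index_ne_zero _)
      obtain ⟨S, hSgen, hSfin⟩ := (Subgroup.fg_iff _).1 hfgK
      have hmem : ∀ x ∈ S, ∃ K ∈ c, x ∈ K := by
        intro x hx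
        have : x ∈ sSup c := hSgen ▸ Subgroup.subset_closure hx
        exact (Subgroup.mem_sSup_of_directedOn ⟨y, hy⟩ hc.directedOn).1 this
      -- find a single member of the chain containing all of S
      have hdir : DirectedOn (· ≤ ·) c := hc.directedOn
      have key : ∀ t : Set G, t.Finite → t ⊆ S → ∃ K ∈ c, t ⊆ ↑K := by
        intro t ht
        refine Set.Finite.induction_on (motive := fun t _ => t ⊆ S → ∃ K ∈ c, t ⊆ ↑K) t ht (fun _ => ⟨y, hy, by simp⟩) ?_
        rintro a s _ _ ih hsub
        obtain ⟨K, hKc, hsK⟩ := ih ((Set.subset_insert a s).trans hsub)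
        obtain ⟨L, hLc, haL⟩ := hmem a (hsub (Set.mem_insert a s))
        obtain ⟨M, hMc, hLM, hKM⟩ := hdir L hLc K hKc
        exact ⟨M, hMc, Set.insert_subset (hLM haL) (hsK.trans (SetLike.coe_subset_coe.2 hKM))⟩
      obtain ⟨K, hKc, hSK⟩ := key S hSfin subset_rfl
      have : sSup c ≤ K := by
        rw [← hSgen]; exact Subgroup.closure_le K |>.2 hSK
      have hKtop : K = sSup c := le_antisymm (le_sSup hKc) this
      exact hind (hKtop ▸ hcs hKc))
    H hH
  refine ⟨W, ⟨hWs, fun M hM => fun hMind => ?_⟩, hHW⟩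
  exact hM.ne (le_antisymm hM.le (hWmax hMind hM.le))
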